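/- arXiv:2401.12579 — 2 statements merged into one kernel-verified Lean document; each statement's English description precedes it below -/
import Mathlib

section
/- Let a < b be real numbers, let ν ∈ ℕ, and let f : ℝ → ℝ be of class C^ν on the interval [a,b]. Let a < t₁ < ⋯ < t_r < b and let ε > 0. Then there exists a real polynomial g in one variable such that: (i) for every k with 0 ≤ k ≤ ν, |f^{(k)}(x) − g^{(k)}(x)| < ε for all x ∈ [a,b], where f^{(k)} denotes the k-th derivative of f taken within [a,b]; and (ii) g^{(k)}(tᵢ) = f^{(k)}(tᵢ) for every i = 1,…,r and every 0 ≤ k ≤ ν. -/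
open Polynomial Set

private lemma iter_deriv_add (k : ℕ) (p q : ℝ[X]) :
    derivative^[k] (p + q) = derivative^[k] p + derivative^[k] q := by
  induction k with
  | zero => simp
  | succ n ih => simp [Function.iterate_succ_apply', ih]

private lemma antideriv (q : ℝ[X]) :
    ∃ P : ℝ[X], derivative P = q := by
  refine ⟨q.sum fun n c => C (c / (n + 1)) * X ^ (n + 1), ?_⟩
  rw [Polynomial.sum, map_sum]
  conv_rhs => rw [← q.sum_C_mul_X_pow_eq]
  rw [Polynomial.sum]
  refine Finset.sum_congr rfl fun n _ => ?_
  rw [derivative_C_mul_X_pow]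
  congr 1
  congr 1
  push_cast
  field_simp

theorem cnu_weierstrass (a b : ℝ) (hab : a < b) :
    ∀ (ν : ℕ) (f : ℝ → ℝ), ContDiffOn ℝ ν f (Set.Icc a b) → ∀ ε > 0,
    ∃ p : ℝ[X], ∀ k ≤ ν, ∀ x ∈ Set.Icc a b,
      |iteratedDerivWithin k f (Set.Icc a b) x - (derivative^[k] p).eval x| < ε := by
  intro ν
  induction ν with
  | zero =>
    intro f hf ε hε
    obtain ⟨p, hp⟩ := exists_polynomial_near_of_continuousOn a b f
      (by simpa using hf.continuousOn) ε hε
    refine ⟨p, fun k hk x hx => ?_⟩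
    interval_cases k
    simpa [abs_sub_comm] using hp x hx
  | succ ν IH =>
    intro f hf ε hε
    have hs : UniqueDiffOn ℝ (Set.Icc a b) := uniqueDiffOn_Icc hab
    set s := Set.Icc a b with hsdef
    have hf' : ContDiffOn ℝ ν (derivWithin f s) s := by
      apply hf.derivWithin hs
      exact_mod_cast le_refl ((ν : ℕ∞) + 1)
    set ε' := ε / (1 + (b - a)) with hε'def
    have hba : (0:ℝ) < 1 + (b - a) := by linarith
    have hε' : 0 < ε' := div_pos hε hba
    obtain ⟨q, hq⟩ := IH (derivWithin f s) hf' ε' hε'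
    obtain ⟨P, hP⟩ := antideriv q
    set p := P + C (f a - P.eval a) with hpdef
    have hdp : derivative p = q := by simp [hpdef, hP]
    have ha : a ∈ s := Set.left_mem_Icc.2 hab.le
    refine ⟨p, fun k hk x hx => ?_⟩
    match k with
    | Nat.succ k' =>
      have hk' : k' ≤ ν := Nat.succ_le_succ_iff.1 hk
      rw [iteratedDerivWithin_succ']
      have : derivative^[k' + 1] p = derivative^[k'] q := by
        rw [Function.iterate_succ_apply, hdp]
      rw [this]
      exact lt_of_lt_of_le (hq k' hk' x hx) (by
        rw [hε'def, div_le_iff₀ hba]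
        nlinarith)
    | 0 =>
      simp only [iteratedDerivWithin_zero, Function.iterate_zero_apply]
      have hfd : DifferentiableOn ℝ f s := hf.differentiableOn (by
        simp)
      have hgd : DifferentiableOn ℝ (fun y => f y - p.eval y) s :=
        hfd.sub (Polynomial.differentiable p).differentiableOn
      have hbound : ∀ y ∈ s, ‖derivWithin (fun y => f y - p.eval y) s y‖ ≤ ε' := by
        intro y hy
        have h1 : derivWithin (fun y => f y - p.eval y) s y
            = derivWithin f s y - (derivative p).eval y := by
          rw [derivWithin_fun_sub (hfd y hy) ((Polynomial.differentiable p).differentiableAt.differentiableWithinAt)]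
          congr 1
          rw [(Polynomial.differentiable p).differentiableAt.derivWithin (hs y hy)]
          exact Polynomial.deriv p
        rw [h1, hdp]
        have := hq 0 (Nat.zero_le ν) y hy
        simp only [iteratedDerivWithin_zero, Function.iterate_zero_apply] at this
        exact le_of_lt (by simpa [Real.norm_eq_abs] using this)
      have hmvt := (convex_Icc a b).norm_image_sub_le_of_norm_derivWithin_le
        hgd hbound hx ha
      have hpa : f a - p.eval a = 0 := by simp [hpdef]
      have hxa : ‖x - a‖ ≤ b - a := by
        rw [Real.norm_eq_abs, abs_of_nonneg (by linarith [hx.1])]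
        linarith [hx.2]
      calc |f x - p.eval x| = ‖(f a - p.eval a) - (f x - p.eval x)‖ := by
            rw [hpa]; simp [Real.norm_eq_abs, abs_sub_comm]
        _ ≤ ε' * ‖a - x‖ := hmvt
        _ ≤ ε' * (b - a) := by
            rw [norm_sub_rev]
            exact mul_le_mul_of_nonneg_left hxa hε'.le
        _ < ε' * (1 + (b - a)) := by nlinarith
        _ = ε := by rw [hε'def]; exact div_mul_cancel₀ ε hba.ne'
private lemma iter_deriv_add' (k : ℕ) (p q : ℝ[X]) :
    derivative^[k] (p + q) = derivative^[k] p + derivative^[k] q := by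
  induction k with
  | zero => simp
  | succ n ih => simp [Function.iterate_succ_apply', ih]

private lemma iter_deriv_smul' (k : ℕ) (c : ℝ) (p : ℝ[X]) :
    derivative^[k] (c • p) = c • derivative^[k] p := by
  induction k with
  | zero => simp
  | succ n ih => simp [Function.iterate_succ_apply', ih]

section hermite

variable (ν r : ℕ) (t : Fin r → ℝ)

/-- The Hermite evaluation map. -/
noncomputable def hermiteE : degreeLT ℝ (r * (ν + 1)) →ₗ[ℝ] (Fin r × Fin (ν + 1) → ℝ) where
  toFun g ik := (derivative^[(ik.2 : ℕ)] (g : ℝ[X])).eval (t ik.1)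
  map_add' g h := by
    funext ik
    simp [iter_deriv_add']
  map_smul' c g := by
    funext ik
    simp [iter_deriv_smul']

lemma hermiteE_bijective (ht : StrictMono t) : Function.Bijective (hermiteE ν r t) := by
  have hinj : Function.Injective (hermiteE ν r t) := by
    rw [← LinearMap.ker_eq_bot, LinearMap.ker_eq_bot']
    rintro ⟨g, hg⟩ h0
    ext1
    simp only [Submodule.coe_zero]
    by_contra hgne
    -- each t i is a root of multiplicity ≥ ν + 1
    have hroot : ∀ i : Fin r, (X - C (t i)) ^ (ν + 1) ∣ g := by
      intro i
      have hlt : ν < g.rootMultiplicity (t i) := by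
        rw [lt_rootMultiplicity_iff_isRoot_iterate_derivative hgne]
        intro m hm
        have := congrFun h0 (i, ⟨m, Nat.lt_succ_of_le hm⟩)
        simpa [hermiteE, IsRoot] using this
      exact dvd_trans (pow_dvd_pow _ hlt) (g.pow_rootMultiplicity_dvd (t i))
    have hprod : (∏ i : Fin r, (X - C (t i)) ^ (ν + 1)) ∣ g := by
      refine Finset.prod_dvd_of_coprime ?_ fun i _ => hroot i
      intro i _ j _ hij
      exact ((pairwise_coprime_X_sub_C ht.injective hij).pow)
    have hdeg : (r * (ν + 1) : ℕ) ≤ g.natDegree := by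
      have h1 : (∏ i : Fin r, (X - C (t i)) ^ (ν + 1)).natDegree = r * (ν + 1) := by
        rw [natDegree_prod _ _ fun i _ => pow_ne_zero _ (X_sub_C_ne_zero (t i))]
        simp [natDegree_pow]
      calc (r * (ν + 1) : ℕ) = _ := h1.symm
        _ ≤ g.natDegree := natDegree_le_of_dvd hprod hgne
    have : g.natDegree < r * (ν + 1) :=
      (Polynomial.natDegree_lt_iff_degree_lt hgne).2 (Polynomial.mem_degreeLT.1 hg)
    omega
  have hfr : Module.finrank ℝ (degreeLT ℝ (r * (ν + 1)))
      = Module.finrank ℝ (Fin r × Fin (ν + 1) → ℝ) := by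
    rw [(Polynomial.degreeLTEquiv ℝ (r * (ν + 1))).finrank_eq]
    simp [mul_comm]
  haveI : FiniteDimensional ℝ (degreeLT ℝ (r * (ν + 1))) :=
    Module.Finite.equiv (Polynomial.degreeLTEquiv ℝ (r * (ν + 1))).symm
  exact ⟨hinj, (LinearMap.injective_iff_surjective_of_finrank_eq_finrank hfr).1 hinj⟩

/-- The Hermite interpolation with uniform bound. -/
lemma hermite_solution (a b : ℝ) (ht : StrictMono t) :
    ∃ C : ℝ, 0 < C ∧ ∀ δ > (0:ℝ), ∀ d : Fin r × Fin (ν + 1) → ℝ, (∀ ik, |d ik| ≤ δ) →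
      ∃ h : ℝ[X],
        (∀ (i : Fin r) (k : Fin (ν + 1)), (derivative^[(k:ℕ)] h).eval (t i) = d (i, k)) ∧
        (∀ k ≤ ν, ∀ x ∈ Set.Icc a b, |(derivative^[k] h).eval x| ≤ C * δ) := by
  classical
  set S := (LinearEquiv.ofBijective _ (hermiteE_bijective ν r t ht)).symm with hS
  -- the linear map sending data to the tuple of derivative restrictions
  let T : (Fin r × Fin (ν + 1) → ℝ) →ₗ[ℝ] (Fin (ν + 1) → C(Set.Icc a b, ℝ)) :=
    { toFun := fun d k => (derivative^[(k:ℕ)] ((S d : degreeLT ℝ (r * (ν+1))) : ℝ[X])).toContinuousMapOn (Set.Icc a b)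
      map_add' := by
        intro d e
        funext k
        ext x
        have : ((S (d + e) : degreeLT ℝ (r * (ν+1))) : ℝ[X])
            = (S d : ℝ[X]) + (S e : ℝ[X]) := by rw [map_add]; rfl
        simp [this, iter_deriv_add']
      map_smul' := by
        intro c d
        funext k
        ext x
        have : ((S (c • d) : degreeLT ℝ (r * (ν+1))) : ℝ[X])
            = c • (S d : ℝ[X]) := by rw [map_smul]; rfl
        simp [this, iter_deriv_smul'] }
  let L := LinearMap.toContinuousLinearMap T
  refine ⟨‖L‖ + 1, by positivity, fun δ hδ d hd => ?_⟩
  refine ⟨(S d : ℝ[X]), ?_, ?_⟩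
  · intro i k
    have := (LinearEquiv.ofBijective _ (hermiteE_bijective ν r t ht)).apply_symm_apply d
    exact congrFun this (i, k)
  · intro k hk x hx
    have hdn : ‖d‖ ≤ δ := by
      rw [pi_norm_le_iff_of_nonneg hδ.le]
      intro ik
      simpa [Real.norm_eq_abs] using hd ik
    have h1 : ‖L d‖ ≤ ‖L‖ * δ :=
      (L.le_opNorm d).trans (by gcongr)
    have h2 : ‖(T d) ⟨k, Nat.lt_succ_of_le hk⟩‖ ≤ ‖L d‖ := norm_le_pi_norm (T d) _
    have h3 : |((T d) ⟨k, Nat.lt_succ_of_le hk⟩) ⟨x, hx⟩| ≤ ‖(T d) ⟨k, Nat.lt_succ_of_le hk⟩‖ :=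
      ((T d) _).norm_coe_le_norm _
    have h4 : ((T d) ⟨k, Nat.lt_succ_of_le hk⟩) ⟨x, hx⟩
        = (derivative^[k] ((S d : degreeLT ℝ (r * (ν+1))) : ℝ[X])).eval x := rfl
    calc |(derivative^[k] ((S d : degreeLT ℝ (r * (ν+1))) : ℝ[X])).eval x|
        ≤ ‖L d‖ := by rw [← h4]; exact h3.trans h2
      _ ≤ ‖L‖ * δ := h1
      _ ≤ (‖L‖ + 1) * δ := by nlinarith
end hermite

/-- Simultaneous polynomial approximation and Hermite interpolation: if `f` is `Cᵛ` on
`[a,b]`, `a < t₁ < ⋯ < t_r < b` and `ε > 0`, there is a real polynomial `g` whose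
derivatives up to order `ν` are uniformly `ε`-close to those of `f` on `[a,b]` and agree
with those of `f` at each `tᵢ`. -/
theorem poly_approx_with_interpolation (a b : ℝ) (hab : a < b) (ν : ℕ)
    (f : ℝ → ℝ) (hf : ContDiffOn ℝ ν f (Set.Icc a b))
    (r : ℕ) (t : Fin r → ℝ) (ht : StrictMono t) (htmem : ∀ i, t i ∈ Set.Ioo a b)
    (ε : ℝ) (hε : 0 < ε) :
    ∃ g : Polynomial ℝ,
      (∀ k ≤ ν, ∀ x ∈ Set.Icc a b,
        |iteratedDerivWithin k f (Set.Icc a b) x - (Polynomial.derivative^[k] g).eval x| < ε) ∧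
      (∀ i : Fin r, ∀ k ≤ ν,
        (Polynomial.derivative^[k] g).eval (t i) =
          iteratedDerivWithin k f (Set.Icc a b) (t i)) := by
  obtain ⟨C, hC, hsol⟩ := hermite_solution ν r t a b ht
  set δ := min (ε / 2) (ε / (2 * C)) with hδdef
  have hδ : 0 < δ := lt_min (by positivity) (by positivity)
  obtain ⟨p, hp⟩ := cnu_weierstrass a b hab ν f hf δ hδ
  set d : Fin r × Fin (ν + 1) → ℝ := fun ik =>
    iteratedDerivWithin (ik.2 : ℕ) f (Set.Icc a b) (t ik.1)
      - (derivative^[(ik.2 : ℕ)] p).eval (t ik.1) with hddef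
  have htIcc : ∀ i, t i ∈ Set.Icc a b := fun i => ⟨(htmem i).1.le, (htmem i).2.le⟩
  have hd : ∀ ik, |d ik| ≤ δ := fun ik =>
    (hp (ik.2 : ℕ) (Nat.lt_succ_iff.1 ik.2.isLt) (t ik.1) (htIcc ik.1)).le
  obtain ⟨h, hinterp, hbd⟩ := hsol δ hδ d hd
  refine ⟨p + h, ?_, ?_⟩
  · intro k hk x hx
    have h1 := hp k hk x hx
    have h2 := hbd k hk x hx
    have hCδ : C * δ ≤ ε / 2 := by
      calc C * δ ≤ C * (ε / (2 * C)) := by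
            exact mul_le_mul_of_nonneg_left (min_le_right _ _) hC.le
        _ = ε / 2 := by field_simp
    have hδε : δ ≤ ε / 2 := min_le_left _ _
    rw [iter_deriv_add', eval_add]
    calc |iteratedDerivWithin k f (Set.Icc a b) x
          - ((derivative^[k] p).eval x + (derivative^[k] h).eval x)|
        ≤ |iteratedDerivWithin k f (Set.Icc a b) x - (derivative^[k] p).eval x|
          + |(derivative^[k] h).eval x| := by
          rw [sub_add_eq_sub_sub]; exact abs_sub (_ - _) _
      _ < δ + C * δ := add_lt_add_of_lt_of_le h1 h2
      _ ≤ ε / 2 + ε / 2 := add_le_add hδε hCδ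
      _ = ε := by ring
  · intro i k hk
    have := hinterp i ⟨k, Nat.lt_succ_of_le hk⟩
    rw [iter_deriv_add', eval_add, this]
    simp only [hddef]
    ring
end

section
/- Let U ⊆ ℝ^n be a connected open set and let x, y ∈ U. Then there exists a polynomial map α : ℝ → ℝ^n (each component a univariate real polynomial) such that α(0) = x, α(1) = y and α([0,1]) ⊆ U. -/
/-- Connexion by polynomial paths: any two points of a connected open subset `U ⊆ ℝⁿ`
can be joined by a polynomial path `α : ℝ → ℝⁿ` with `α([0,1]) ⊆ U`. -/
theorem connected_open_polynomial_path (n : ℕ)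
    (U : Set (EuclideanSpace ℝ (Fin n))) (hopen : IsOpen U) (hconn : IsConnected U)
    (x y : EuclideanSpace ℝ (Fin n)) (hx : x ∈ U) (hy : y ∈ U) :
    ∃ α : ℝ → EuclideanSpace ℝ (Fin n),
      (∃ p : Fin n → Polynomial ℝ, ∀ t i, α t i = (p i).eval t) ∧
      α 0 = x ∧ α 1 = y ∧ α '' Set.Icc (0 : ℝ) 1 ⊆ U := by
  have hpc : IsPathConnected U := (hopen.isConnected_iff_isPathConnected).mp hconn
  obtain ⟨γ, hγ⟩ := hpc.joinedIn x hx y hy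
  set K : Set (EuclideanSpace ℝ (Fin n)) := Set.range γ with hK
  have hKc : IsCompact K := isCompact_range γ.continuous
  have hKU : K ⊆ U := by rintro _ ⟨t, rfl⟩; exact hγ t
  obtain ⟨δ, hδpos, hthick⟩ := hKc.exists_thickening_subset_open hopen hKU
  have hsn : (0:ℝ) ≤ Real.sqrt n := Real.sqrt_nonneg _
  set δ' : ℝ := δ / (3 * (Real.sqrt n + 1)) with hδ'def
  have hδ'pos : 0 < δ' := by positivity
  -- coordinate functions of the path
  have hfc : ∀ i : Fin n, Continuous fun t : Set.Icc (0:ℝ) 1 =>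
      (γ t : EuclideanSpace ℝ (Fin n)) i :=
    fun i => (EuclideanSpace.proj i).continuous.comp γ.continuous
  have hpoly : ∀ i : Fin n, ∃ p : Polynomial ℝ,
      ‖p.toContinuousMapOn (Set.Icc (0:ℝ) 1) - ⟨_, hfc i⟩‖ < δ' :=
    fun i => exists_polynomial_near_continuousMap 0 1 ⟨_, hfc i⟩ δ' hδ'pos
  choose p hp using hpoly
  -- pointwise coordinate bound
  have hbound : ∀ (t : ℝ) (ht : t ∈ Set.Icc (0:ℝ) 1) (i : Fin n),
      |(p i).eval t - (γ ⟨t, ht⟩ : EuclideanSpace ℝ (Fin n)) i| ≤ δ' := by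
    intro t ht i
    have := ContinuousMap.norm_coe_le_norm
      ((p i).toContinuousMapOn (Set.Icc (0:ℝ) 1) - ⟨_, hfc i⟩) ⟨t, ht⟩
    simp only [ContinuousMap.sub_apply, Polynomial.toContinuousMapOn_apply,
      Polynomial.toContinuousMap_apply, ContinuousMap.coe_mk, Real.norm_eq_abs] at this
    exact this.trans (hp i).le
  -- corrected polynomials with exact endpoints
  set q : Fin n → Polynomial ℝ := fun i =>
    p i + Polynomial.C (x i - (p i).eval 0) * (1 - Polynomial.X)
        + Polynomial.C (y i - (p i).eval 1) * Polynomial.X with hq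
  set α : ℝ → EuclideanSpace ℝ (Fin n) := fun t => WithLp.toLp 2 (fun i => (q i).eval t) with hα
  refine ⟨α, ⟨q, fun t i => rfl⟩, ?_, ?_, ?_⟩
  · ext i
    show (q i).eval 0 = x i
    simp only [hq, Polynomial.eval_add, Polynomial.eval_mul, Polynomial.eval_sub,
      Polynomial.eval_C, Polynomial.eval_X, Polynomial.eval_one]
    ring
  · ext i
    show (q i).eval 1 = y i
    simp only [hq, Polynomial.eval_add, Polynomial.eval_mul, Polynomial.eval_sub,
      Polynomial.eval_C, Polynomial.eval_X, Polynomial.eval_one]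
    ring
  · rintro _ ⟨t, ht, rfl⟩
    apply hthick
    rw [Metric.mem_thickening_iff]
    refine ⟨γ ⟨t, ht⟩, ⟨⟨t, ht⟩, rfl⟩, ?_⟩
    have h0 : t ∈ Set.Icc (0:ℝ) 1 := ht
    obtain ⟨ht0, ht1⟩ := h0
    -- coordinatewise bound on the corrected polynomial
    have hco : ∀ i : Fin n,
        |(q i).eval t - (γ ⟨t, ht⟩ : EuclideanSpace ℝ (Fin n)) i| ≤ 3 * δ' := by
      intro i
      have h1 := hbound t ht i
      have h2 := hbound 0 (by norm_num) i
      have h3 := hbound 1 (by norm_num) i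
      have hx0 : (γ ⟨0, by norm_num⟩ : EuclideanSpace ℝ (Fin n)) i = x i := by
        have : γ ⟨0, by norm_num⟩ = x := γ.source
        rw [this]
      have hy1 : (γ ⟨1, by norm_num⟩ : EuclideanSpace ℝ (Fin n)) i = y i := by
        have : γ ⟨1, by norm_num⟩ = y := γ.target
        rw [this]
      rw [hx0] at h2
      rw [hy1] at h3
      have heval : (q i).eval t - (γ ⟨t, ht⟩ : EuclideanSpace ℝ (Fin n)) i =
          ((p i).eval t - (γ ⟨t, ht⟩ : EuclideanSpace ℝ (Fin n)) i)
          + (1 - t) * (x i - (p i).eval 0) + t * (y i - (p i).eval 1) := by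
        simp [hq, Polynomial.eval_add, Polynomial.eval_mul, Polynomial.eval_sub]
        ring
      rw [heval]
      have e2 : |(1 - t) * (x i - (p i).eval 0)| ≤ δ' := by
        rw [abs_mul]
        calc |1 - t| * |x i - (p i).eval 0| ≤ 1 * δ' := by
              apply mul_le_mul
              · rw [abs_of_nonneg (by linarith)]; linarith
              · rw [abs_sub_comm] at h2; exact h2
              · exact abs_nonneg _
              · norm_num
          _ = δ' := one_mul _
      have e3 : |t * (y i - (p i).eval 1)| ≤ δ' := by
        rw [abs_mul]
        calc |t| * |y i - (p i).eval 1| ≤ 1 * δ' := by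
              apply mul_le_mul
              · rw [abs_of_nonneg ht0]; exact ht1
              · rw [abs_sub_comm] at h3; exact h3
              · exact abs_nonneg _
              · norm_num
          _ = δ' := one_mul _
      calc |_ + _ + _| ≤ |_ + _| + |t * (y i - (p i).eval 1)| := abs_add_le _ _
        _ ≤ |(p i).eval t - (γ ⟨t, ht⟩ : EuclideanSpace ℝ (Fin n)) i|
              + |(1 - t) * (x i - (p i).eval 0)| + |t * (y i - (p i).eval 1)| := by
            have := abs_add_le ((p i).eval t - (γ ⟨t, ht⟩ : EuclideanSpace ℝ (Fin n)) i)
              ((1 - t) * (x i - (p i).eval 0))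
            linarith
        _ ≤ 3 * δ' := by linarith
    -- euclidean distance bound
    have hdist : dist (α t) (γ ⟨t, ht⟩)
        ≤ Real.sqrt n * (3 * δ') := by
      rw [EuclideanSpace.dist_eq]
      have hsum : ∑ i, dist ((q i).eval t) ((γ ⟨t, ht⟩ : EuclideanSpace ℝ (Fin n)) i) ^ 2
          ≤ (n : ℝ) * (3 * δ') ^ 2 := by
        calc ∑ i, dist ((q i).eval t) ((γ ⟨t, ht⟩ : EuclideanSpace ℝ (Fin n)) i) ^ 2
            ≤ ∑ _i : Fin n, (3 * δ') ^ 2 := by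
              apply Finset.sum_le_sum
              intro i _
              rw [Real.dist_eq]
              exact pow_le_pow_left₀ (abs_nonneg _) (hco i) 2
          _ = (n : ℝ) * (3 * δ') ^ 2 := by
              rw [Finset.sum_const, Finset.card_univ, Fintype.card_fin, nsmul_eq_mul]
      calc Real.sqrt (∑ i, dist ((q i).eval t) ((γ ⟨t, ht⟩ : EuclideanSpace ℝ (Fin n)) i) ^ 2)
          ≤ Real.sqrt ((n : ℝ) * (3 * δ') ^ 2) := Real.sqrt_le_sqrt hsum
        _ = Real.sqrt n * (3 * δ') := by
            rw [Real.sqrt_mul (Nat.cast_nonneg n), Real.sqrt_sq (by positivity)]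
    refine lt_of_le_of_lt hdist ?_
    rw [hδ'def]
    rw [show Real.sqrt n * (3 * (δ / (3 * (Real.sqrt n + 1)))) =
        δ * (Real.sqrt n / (Real.sqrt n + 1)) by field_simp]
    have : Real.sqrt n / (Real.sqrt n + 1) < 1 := by
      rw [div_lt_one (by positivity)]; linarith
    nlinarith [hδpos]
end
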